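/- arXiv:1202.2782 — 8 statements merged into one kernel-verified Lean document; each statement's English description precedes it below -/
import Mathlib

section
/- For a > b > 0, the functions f_n(φ) = 1/√(a_n² cos²φ + b_n² sin²φ) converge uniformly on [0, π/2] to the constant function 1/μ, where μ = M(a,b) and a_n, b_n are the AGM sequences. -/
open Real Filter

theorem agm_integrand_tendstoUniformly (a b : ℝ) (hb : 0 < b) (hab : b < a)
    (A B : ℕ → ℝ) (hA0 : A 0 = a) (hB0 : B 0 = b)
    (hA : ∀ n, A (n + 1) = (A n + B n) / 2)
    (hB : ∀ n, B (n + 1) = Real.sqrt (A n * B n))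
    (μ : ℝ) (hμA : Tendsto A atTop (nhds μ)) (hμB : Tendsto B atTop (nhds μ)) :
    TendstoUniformlyOn
      (fun n φ => 1 / Real.sqrt ((A n) ^ 2 * Real.cos φ ^ 2 + (B n) ^ 2 * Real.sin φ ^ 2))
      (fun _ => 1 / μ) atTop (Set.Icc 0 (π / 2)) := by
  have key : ∀ n, b ≤ B n ∧ B n ≤ A n := by
    intro n
    induction n with
    | zero => refine ⟨by simp [hB0], by simp [hA0, hB0]; linarith⟩
    | succ n ih =>
      obtain ⟨h1, h2⟩ := ih
      constructor
      · rw [hB]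
        calc b = Real.sqrt (b * b) := by rw [Real.sqrt_mul_self hb.le]
          _ ≤ Real.sqrt (A n * B n) := Real.sqrt_le_sqrt (by nlinarith)
      · rw [hB, hA]
        calc Real.sqrt (A n * B n) ≤ Real.sqrt (((A n + B n) / 2) ^ 2) :=
              Real.sqrt_le_sqrt (by nlinarith)
          _ = (A n + B n) / 2 := Real.sqrt_sq (by linarith)
  have hBmono : Monotone B := monotone_nat_of_le_succ (fun n => by
    obtain ⟨h1, h2⟩ := key n
    rw [hB]
    calc B n = Real.sqrt (B n * B n) := (Real.sqrt_mul_self (by linarith)).symm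
      _ ≤ Real.sqrt (A n * B n) := Real.sqrt_le_sqrt (by nlinarith))
  have hAanti : Antitone A := antitone_nat_of_succ_le (fun n => by
    obtain ⟨h1, h2⟩ := key n; rw [hA]; linarith)
  have hBμ : ∀ n, B n ≤ μ := fun n => hBmono.ge_of_tendsto hμB n
  have hμA' : ∀ n, μ ≤ A n := fun n => hAanti.le_of_tendsto hμA n
  have hbμ : b ≤ μ := le_trans (key 0).1 (hBμ 0)
  rw [Metric.tendstoUniformlyOn_iff]
  intro ε hε
  have hdiff : Tendsto (fun n => (A n - B n) / b ^ 2) atTop (nhds 0) := by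
    have := (hμA.sub hμB).div_const (b ^ 2)
    simpa using this
  filter_upwards [hdiff.eventually_lt_const hε] with n hn φ hφ
  obtain ⟨h1, h2⟩ := key n
  set s := A n ^ 2 * Real.cos φ ^ 2 + B n ^ 2 * Real.sin φ ^ 2 with hs
  have hc : Real.cos φ ^ 2 + Real.sin φ ^ 2 = 1 := by
    rw [add_comm]; exact Real.sin_sq_add_cos_sq φ
  have hA2 : B n ^ 2 ≤ A n ^ 2 := by nlinarith
  have hs1 : B n ^ 2 ≤ s := by
    rw [hs]
    nlinarith [mul_le_mul_of_nonneg_right hA2 (sq_nonneg (Real.cos φ))]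
  have hs2 : s ≤ A n ^ 2 := by
    rw [hs]
    nlinarith [mul_le_mul_of_nonneg_right hA2 (sq_nonneg (Real.sin φ))]
  set x := Real.sqrt s with hx
  have hxl : B n ≤ x := by
    rw [hx]
    calc B n = Real.sqrt (B n ^ 2) := (Real.sqrt_sq (by linarith)).symm
      _ ≤ Real.sqrt s := Real.sqrt_le_sqrt hs1
  have hxu : x ≤ A n := by
    rw [hx]
    calc Real.sqrt s ≤ Real.sqrt (A n ^ 2) := Real.sqrt_le_sqrt hs2
      _ = A n := Real.sqrt_sq (by linarith)
  have hbx : b ≤ x := le_trans h1 hxl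
  have hμpos : 0 < μ := lt_of_lt_of_le hb hbμ
  have hxpos : 0 < x := lt_of_lt_of_le hb hbx
  rw [Real.dist_eq]
  have heq : 1 / μ - 1 / x = (x - μ) / (μ * x) := by
    field_simp
  have hxμ : |x - μ| ≤ A n - B n := by
    rw [abs_le]
    constructor
    · linarith [hμA' n]
    · linarith [hBμ n]
  calc |1 / μ - 1 / x| = |x - μ| / (μ * x) := by
        rw [heq, abs_div, abs_of_pos (mul_pos hμpos hxpos)]
    _ ≤ (A n - B n) / b ^ 2 :=
        div_le_div₀ (by linarith) hxμ (by positivity) (by nlinarith)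
    _ < ε := hn
end

section
/- Let a > b > 0, a₁ = (a+b)/2, b₁ = √(ab). If sin φ = 2a sin φ' / (a + b + (a − b) sin²φ'), with φ, φ' ∈ [0, π/2], then cos φ = 2 cos φ' √(a₁² cos²φ' + b₁² sin²φ') / (a + b + (a − b) sin²φ'). -/
open Real

theorem gauss_cos_identity (a b : ℝ) (hb : 0 < b) (hab : b < a)
    (a₁ b₁ : ℝ) (ha₁ : a₁ = (a + b) / 2) (hb₁ : b₁ = Real.sqrt (a * b))
    (φ φ' : ℝ) (hφ : φ ∈ Set.Icc 0 (π / 2)) (hφ' : φ' ∈ Set.Icc 0 (π / 2))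
    (h : Real.sin φ = 2 * a * Real.sin φ' / (a + b + (a - b) * Real.sin φ' ^ 2)) :
    Real.cos φ =
      2 * Real.cos φ' * Real.sqrt (a₁ ^ 2 * Real.cos φ' ^ 2 + b₁ ^ 2 * Real.sin φ' ^ 2) /
        (a + b + (a - b) * Real.sin φ' ^ 2) := by
  obtain ⟨h0, h1⟩ := hφ
  obtain ⟨h0', h1'⟩ := hφ'
  set s := Real.sin φ' with hs
  set c := Real.cos φ' with hcdef
  have hpi := Real.pi_pos
  have ha : 0 < a := hb.trans hab
  have hc : 0 ≤ c := Real.cos_nonneg_of_mem_Icc ⟨by linarith, h1'⟩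
  have hsc : s ^ 2 + c ^ 2 = 1 := Real.sin_sq_add_cos_sq φ'
  have hD : 0 < a + b + (a - b) * s ^ 2 := by nlinarith [sq_nonneg s]
  have hcφ : 0 ≤ Real.cos φ := Real.cos_nonneg_of_mem_Icc ⟨by linarith, h1⟩
  have hcos : Real.cos φ = Real.sqrt (1 - Real.sin φ ^ 2) := by
    have h2 := Real.sin_sq_add_cos_sq φ
    rw [show 1 - Real.sin φ ^ 2 = Real.cos φ ^ 2 by linarith, Real.sqrt_sq hcφ]
  have hb1 : b₁ ^ 2 = a * b := by
    rw [hb₁]; exact Real.sq_sqrt (by positivity)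
  have hX : 0 ≤ a₁ ^ 2 * c ^ 2 + b₁ ^ 2 * s ^ 2 := by
    rw [hb1]; positivity
  have key : 1 - (2 * a * s / (a + b + (a - b) * s ^ 2)) ^ 2 =
      4 * c ^ 2 * (a₁ ^ 2 * c ^ 2 + b₁ ^ 2 * s ^ 2) / (a + b + (a - b) * s ^ 2) ^ 2 := by
    rw [hb1, ha₁]
    have hc2 : c ^ 2 = 1 - s ^ 2 := by linarith
    rw [div_pow, one_sub_div (pow_pos hD 2).ne', hc2]
    congr 1; ring
  rw [hcos, h, key, Real.sqrt_div (by positivity) , Real.sqrt_sq hD.le]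
  congr 1
  rw [show 4 * c ^ 2 * (a₁ ^ 2 * c ^ 2 + b₁ ^ 2 * s ^ 2) =
      (2 * c) ^ 2 * (a₁ ^ 2 * c ^ 2 + b₁ ^ 2 * s ^ 2) by ring,
    Real.sqrt_mul (by positivity) , Real.sqrt_sq (by positivity)]
end

section
/- Let a > b > 0, a₁ = (a+b)/2, b₁ = √(ab). If sin φ = 2a sin φ' / (a + b + (a − b) sin²φ') with φ, φ' ∈ [0, π/2], then √(a² cos²φ + b² sin²φ) = a · ((a + b) − (a − b) sin²φ') / ((a + b) + (a − b) sin²φ'). -/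
open Real

theorem gauss_sqrt_identity (a b : ℝ) (hb : 0 < b) (hab : b < a)
    (a₁ b₁ : ℝ) (ha₁ : a₁ = (a + b) / 2) (hb₁ : b₁ = Real.sqrt (a * b))
    (φ φ' : ℝ) (hφ : φ ∈ Set.Icc 0 (π / 2)) (hφ' : φ' ∈ Set.Icc 0 (π / 2))
    (h : Real.sin φ = 2 * a * Real.sin φ' / (a + b + (a - b) * Real.sin φ' ^ 2)) :
    Real.sqrt (a ^ 2 * Real.cos φ ^ 2 + b ^ 2 * Real.sin φ ^ 2) =
      a * ((a + b) - (a - b) * Real.sin φ' ^ 2) / ((a + b) + (a - b) * Real.sin φ' ^ 2) := by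
  set s := Real.sin φ' with hs
  have hs1 : s ^ 2 ≤ 1 := Real.sin_sq_le_one φ'
  have ha : 0 < a := hb.trans hab
  have hDpos : 0 < a + b + (a - b) * s ^ 2 := by nlinarith [sq_nonneg s]
  have hNpos : 0 < (a + b) - (a - b) * s ^ 2 := by nlinarith
  have hcos : Real.cos φ ^ 2 = 1 - Real.sin φ ^ 2 := by
    have := Real.sin_sq_add_cos_sq φ; linarith
  have key : a ^ 2 * Real.cos φ ^ 2 + b ^ 2 * Real.sin φ ^ 2 =
      (a * ((a + b) - (a - b) * s ^ 2) / ((a + b) + (a - b) * s ^ 2)) ^ 2 := by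
    rw [hcos, h]
    field_simp [(show 0 < a + b + s ^ 2 * (a - b) by linarith).ne']
    ring
  rw [key, Real.sqrt_sq (by positivity)]
end

section
/- For a > b > 0, the elliptic integral I(a,b) = ∫₀^{π/2} dφ / √(a² cos²φ + b² sin²φ) satisfies I(a,b) = I((a+b)/2, √(ab)). -/
open Real MeasureTheory Set Filter intervalIntegral
open scoped Topology

noncomputable def Gr (a b t : ℝ) : ℝ := 1 / Real.sqrt ((t ^ 2 + a ^ 2) * (t ^ 2 + b ^ 2))

lemma Gr_cont {a b : ℝ} (ha : 0 < a) (hb : 0 < b) : Continuous (Gr a b) := by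
  apply Continuous.div continuous_const
  · exact Real.continuous_sqrt.comp (by continuity)
  · intro t
    have : 0 < (t ^ 2 + a ^ 2) * (t ^ 2 + b ^ 2) := by positivity
    exact ne_of_gt (Real.sqrt_pos.2 this)

lemma Gr_pos {a b : ℝ} (ha : 0 < a) (hb : 0 < b) (t : ℝ) : 0 < Gr a b t := by
  have : 0 < (t ^ 2 + a ^ 2) * (t ^ 2 + b ^ 2) := by positivity
  simpa [Gr] using Real.sqrt_pos.2 this

lemma Gr_integrableOn {a b : ℝ} (ha : 0 < a) (hb : 0 < b) :
    IntegrableOn (Gr a b) (Ioi 0) := by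
  have h1 : IntegrableOn (Gr a b) (Ioc 0 1) :=
    ((Gr_cont ha hb).continuousOn).integrableOn_Icc (a := 0) (b := 1) |>.mono_set Ioc_subset_Icc_self
  have h2 : IntegrableOn (Gr a b) (Ioi 1) := by
    have hbound : IntegrableOn (fun t : ℝ => t ^ (-2 : ℝ)) (Ioi 1) :=
      integrableOn_Ioi_rpow_of_lt (by norm_num) one_pos
    refine Integrable.mono' hbound ((Gr_cont ha hb).aestronglyMeasurable.restrict) ?_
    filter_upwards [ae_restrict_mem measurableSet_Ioi] with t ht
    have ht1 : (1:ℝ) < t := ht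
    have ht0 : (0:ℝ) < t := lt_trans one_pos ht1
    have hle : t ^ 4 ≤ (t ^ 2 + a ^ 2) * (t ^ 2 + b ^ 2) := by nlinarith [sq_nonneg a, sq_nonneg b, sq_nonneg t]
    have h4 : Real.sqrt (t ^ 4) ≤ Real.sqrt ((t ^ 2 + a ^ 2) * (t ^ 2 + b ^ 2)) :=
      Real.sqrt_le_sqrt hle
    have h5 : Real.sqrt (t ^ 4) = t ^ 2 := by
      rw [show t ^ 4 = (t ^ 2) ^ 2 by ring, Real.sqrt_sq (by positivity)]
    have hpos : (0:ℝ) < Real.sqrt (t ^ 4) := by rw [h5]; positivity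
    have : Gr a b t ≤ 1 / t ^ 2 := by
      have := one_div_le_one_div_of_le hpos h4
      rw [h5] at this
      simpa [Gr] using this
    have hg : 0 < Gr a b t := Gr_pos ha hb t
    rw [Real.norm_eq_abs, abs_of_pos hg, Real.rpow_neg ht0.le]
    calc Gr a b t ≤ 1 / t ^ 2 := this
      _ = (t ^ (2:ℝ))⁻¹ := by rw [← Real.rpow_natCast t 2]; norm_num [one_div]
  have : Ioi (0:ℝ) = Ioc 0 1 ∪ Ioi 1 := (Ioc_union_Ioi_eq_Ioi zero_le_one).symm
  rw [this]
  exact h1.union h2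

lemma trig_pos {a b : ℝ} (ha : 0 < a) (hb : 0 < b) (φ : ℝ) :
    0 < a ^ 2 * Real.cos φ ^ 2 + b ^ 2 * Real.sin φ ^ 2 := by
  have h := Real.sin_sq_add_cos_sq φ
  rcases eq_or_ne (Real.cos φ) 0 with hc | hc
  · have hs : Real.sin φ ^ 2 = 1 := by rw [hc] at h; linarith
    rw [hc, hs]; ring_nf; positivity
  · have h1 : 0 < Real.cos φ ^ 2 := by positivity
    have h2 : 0 < a ^ 2 * Real.cos φ ^ 2 := by positivity
    nlinarith [sq_nonneg (Real.sin φ), sq_nonneg b]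

lemma trig_cont {a b : ℝ} (ha : 0 < a) (hb : 0 < b) :
    Continuous (fun φ : ℝ => 1 / Real.sqrt (a ^ 2 * Real.cos φ ^ 2 + b ^ 2 * Real.sin φ ^ 2)) := by
  apply Continuous.div continuous_const
  · exact Real.continuous_sqrt.comp (by continuity)
  · exact fun φ => ne_of_gt (Real.sqrt_pos.2 (trig_pos ha hb φ))

lemma trig_sub_identity {a b : ℝ} (ha : 0 < a) (hb : 0 < b) {φ : ℝ} (hc : 0 < Real.cos φ) :
    (b / Real.cos φ ^ 2) * Gr a b (b * Real.tan φ) =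
      1 / Real.sqrt (a ^ 2 * Real.cos φ ^ 2 + b ^ 2 * Real.sin φ ^ 2) := by
  have hS : 0 < a ^ 2 * Real.cos φ ^ 2 + b ^ 2 * Real.sin φ ^ 2 := trig_pos ha hb φ
  have hkey : ((b * Real.tan φ) ^ 2 + a ^ 2) * ((b * Real.tan φ) ^ 2 + b ^ 2) =
      (a ^ 2 * Real.cos φ ^ 2 + b ^ 2 * Real.sin φ ^ 2) * (b / Real.cos φ ^ 2) ^ 2 := by
    rw [Real.tan_eq_sin_div_cos]
    have h1 := Real.sin_sq_add_cos_sq φ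
    field_simp
    linear_combination (b ^ 2 * Real.sin φ ^ 2 + Real.cos φ ^ 2 * a ^ 2) * h1
  rw [Gr, hkey, Real.sqrt_mul hS.le, Real.sqrt_sq (by positivity : (0:ℝ) ≤ b / Real.cos φ ^ 2)]
  have h2 : 0 < Real.sqrt (a ^ 2 * Real.cos φ ^ 2 + b ^ 2 * Real.sin φ ^ 2) := Real.sqrt_pos.2 hS
  field_simp

lemma trig_eq_rational {a b : ℝ} (ha : 0 < a) (hb : 0 < b) :
    (∫ φ in (0:ℝ)..(π / 2), 1 / Real.sqrt (a ^ 2 * Real.cos φ ^ 2 + b ^ 2 * Real.sin φ ^ 2)) =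
      ∫ t in Ioi (0:ℝ), Gr a b t := by
  set F : ℝ → ℝ := fun φ => 1 / Real.sqrt (a ^ 2 * Real.cos φ ^ 2 + b ^ 2 * Real.sin φ ^ 2) with hF
  have hFc : Continuous F := trig_cont ha hb
  -- finite substitution
  have hfin : ∀ c ∈ Ioo (0:ℝ) (π / 2),
      (∫ φ in (0:ℝ)..c, F φ) = ∫ t in (0:ℝ)..(b * Real.tan c), Gr a b t := by
    intro c hc
    have hsub : uIcc (0:ℝ) c ⊆ Ioo (-(π/2)) (π/2) := by
      rw [uIcc_of_le hc.1.le]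
      intro x hx
      exact ⟨lt_of_lt_of_le (neg_lt_zero.mpr (by positivity)) hx.1, lt_of_le_of_lt hx.2 hc.2⟩
    have hcos : ∀ x ∈ uIcc (0:ℝ) c, 0 < Real.cos x := fun x hx =>
      Real.cos_pos_of_mem_Ioo (hsub hx)
    have hderiv : ∀ x ∈ uIcc (0:ℝ) c,
        HasDerivAt (fun φ => b * Real.tan φ) (b / Real.cos x ^ 2) x := by
      intro x hx
      have := (Real.hasDerivAt_tan (ne_of_gt (hcos x hx))).const_mul b
      simpa [mul_one_div, div_eq_mul_inv] using this
    have hcont' : ContinuousOn (fun x => b / Real.cos x ^ 2) (uIcc (0:ℝ) c) := by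
      apply ContinuousOn.div continuousOn_const (by fun_prop)
      exact fun x hx => ne_of_gt (pow_pos (hcos x hx) 2)
    have := intervalIntegral.integral_comp_smul_deriv hderiv hcont' (Gr_cont ha hb)
    rw [show Real.tan 0 = 0 by simp, mul_zero] at this
    rw [← this]
    apply intervalIntegral.integral_congr
    intro x hx
    simp only [smul_eq_mul]
    exact (trig_sub_identity ha hb (hcos x hx)).symm
  have hne : (𝓝[<] (π / 2)).NeBot := nhdsLT_neBot _
  have hmem : Ioo (0:ℝ) (π/2) ∈ 𝓝[<] (π / 2) :=
    Ioo_mem_nhdsLT_of_mem ⟨by positivity, le_refl _⟩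
  -- limit of LHS
  have hlim1 : Tendsto (fun c => ∫ φ in (0:ℝ)..c, F φ) (𝓝[<] (π / 2))
      (𝓝 (∫ φ in (0:ℝ)..(π / 2), F φ)) := by
    have : Continuous fun c => ∫ φ in (0:ℝ)..c, F φ :=
      intervalIntegral.continuous_primitive (fun x y => hFc.intervalIntegrable x y) 0
    exact (this.tendsto _).mono_left nhdsWithin_le_nhds
  -- limit of RHS
  have hlim2 : Tendsto (fun c => ∫ t in (0:ℝ)..(b * Real.tan c), Gr a b t) (𝓝[<] (π / 2))
      (𝓝 (∫ t in Ioi (0:ℝ), Gr a b t)) := by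
    apply MeasureTheory.intervalIntegral_tendsto_integral_Ioi 0 (Gr_integrableOn ha hb)
    exact (Real.tendsto_tan_pi_div_two).const_mul_atTop hb
  exact tendsto_nhds_unique (hlim1.congr' (eventuallyEq_of_mem hmem hfin)) hlim2

lemma inv_sub_identity {a b : ℝ} (ha : 0 < a) (hb : 0 < b) {t : ℝ} (ht : 0 < t) :
    (a * b / t ^ 2) * Gr a b (a * b / t) = Gr a b t := by
  have hX : 0 < (t ^ 2 + a ^ 2) * (t ^ 2 + b ^ 2) := by positivity
  have hkey : ((a * b / t) ^ 2 + a ^ 2) * ((a * b / t) ^ 2 + b ^ 2) =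
      ((t ^ 2 + a ^ 2) * (t ^ 2 + b ^ 2)) * (a * b / t ^ 2) ^ 2 := by
    field_simp
    ring
  rw [Gr, Gr, hkey, Real.sqrt_mul hX.le, Real.sqrt_sq (by positivity : (0:ℝ) ≤ a * b / t ^ 2)]
  have h2 : 0 < Real.sqrt ((t ^ 2 + a ^ 2) * (t ^ 2 + b ^ 2)) := Real.sqrt_pos.2 hX
  field_simp

lemma rational_symm {a b : ℝ} (ha : 0 < a) (hb : 0 < b) :
    (∫ t in Ioi (0:ℝ), Gr a b t) = 2 * ∫ t in Ioi (Real.sqrt (a * b)), Gr a b t := by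
  set c := Real.sqrt (a * b) with hcdef
  have hc : 0 < c := Real.sqrt_pos.2 (by positivity)
  have hc2 : c ^ 2 = a * b := Real.sq_sqrt (by positivity)
  have hInt := Gr_integrableOn ha hb
  have hIntc : IntegrableOn (Gr a b) (Ioi c) := hInt.mono_set (Ioi_subset_Ioi hc.le)
  have hIntoc : IntegrableOn (Gr a b) (Ioc 0 c) := hInt.mono_set Ioc_subset_Ioi_self
  have hsplit : (∫ t in Ioi (0:ℝ), Gr a b t) =
      (∫ t in Ioc (0:ℝ) c, Gr a b t) + ∫ t in Ioi c, Gr a b t := by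
    rw [← MeasureTheory.setIntegral_union (Ioc_disjoint_Ioi le_rfl) measurableSet_Ioi
      hIntoc hIntc, Ioc_union_Ioi_eq_Ioi hc.le]
  suffices h : (∫ t in Ioc (0:ℝ) c, Gr a b t) = ∫ t in Ioi c, Gr a b t by
    rw [hsplit, h]; ring
  have habc : a * b / c = c := by
    rw [← hc2]; field_simp
  -- finite substitution
  have hfin : ∀ d ∈ Ici c, (∫ t in c..d, Gr a b t) = ∫ t in (a * b / d)..c, Gr a b t := by
    intro d hd
    have hd' : c ≤ d := hd
    have hpos : uIcc c d ⊆ Ioi 0 := by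
      rw [uIcc_of_le hd']
      exact fun x hx => lt_of_lt_of_le hc hx.1
    have hderiv : ∀ x ∈ uIcc c d, HasDerivAt (fun t => a * b / t) (-(a * b) / x ^ 2) x := by
      intro x hx
      have hx0 : (0:ℝ) < x := hpos hx
      have h := (hasDerivAt_inv (ne_of_gt hx0)).const_mul (a * b)
      have heq : a * b * -(x ^ 2)⁻¹ = -(a * b) / x ^ 2 := by field_simp
      simp only [div_eq_mul_inv]
      exact h.congr_deriv (by ring)
    have hcont' : ContinuousOn (fun x => -(a * b) / x ^ 2) (uIcc c d) := by
      apply ContinuousOn.div continuousOn_const (by fun_prop)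
      exact fun x hx => ne_of_gt (pow_pos (hpos hx) 2)
    have h := intervalIntegral.integral_comp_smul_deriv hderiv hcont' (Gr_cont ha hb)
    simp only [Function.comp_apply] at h
    rw [habc] at h
    have hL : (∫ x in c..d, (-(a * b) / x ^ 2) • Gr a b (a * b / x)) =
        -(∫ t in c..d, Gr a b t) := by
      rw [← intervalIntegral.integral_neg]
      apply intervalIntegral.integral_congr
      intro x hx
      have hx0 : (0:ℝ) < x := hpos hx
      have := inv_sub_identity ha hb hx0
      simp only [smul_eq_mul, neg_div, neg_mul]
      rw [this]
    rw [hL] at h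
    rw [intervalIntegral.integral_symm c (a * b / d)]
    linarith [h]
  -- limits
  have h1 : Tendsto (fun d => ∫ t in c..d, Gr a b t) atTop
      (𝓝 (∫ t in Ioi c, Gr a b t)) :=
    MeasureTheory.intervalIntegral_tendsto_integral_Ioi c hIntc tendsto_id
  have hC : Continuous fun x => ∫ t in x..c, Gr a b t := by
    have h := (intervalIntegral.continuous_primitive (μ := volume)
      (fun x y => (Gr_cont ha hb).intervalIntegrable x y) c).neg
    exact h.congr fun x => (intervalIntegral.integral_symm c x).symm
  have h2 : Tendsto (fun d => ∫ t in (a * b / d)..c, Gr a b t) atTop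
      (𝓝 (∫ t in (0:ℝ)..c, Gr a b t)) := by
    have hdiv : Tendsto (fun d : ℝ => a * b / d) atTop (𝓝 0) :=
      Tendsto.div_atTop tendsto_const_nhds tendsto_id
    exact (hC.tendsto 0).comp hdiv
  have := tendsto_nhds_unique (h1.congr' (eventuallyEq_of_mem (Ici_mem_atTop c) hfin)) h2
  rw [← intervalIntegral.integral_of_le hc.le, this]

lemma gauss_identity {a b : ℝ} (ha : 0 < a) (hb : 0 < b) {t : ℝ} (ht : 0 < t) :
    ((1 + a * b / t ^ 2) / 2) * Gr ((a + b) / 2) (Real.sqrt (a * b)) ((t - a * b / t) / 2) =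
      2 * Gr a b t := by
  have hX : 0 < (t ^ 2 + a ^ 2) * (t ^ 2 + b ^ 2) := by positivity
  have hq : (0:ℝ) ≤ (t ^ 2 + a * b) / (4 * t ^ 2) := by positivity
  have hprod : (((t - a * b / t) / 2) ^ 2 + ((a + b) / 2) ^ 2) *
      (((t - a * b / t) / 2) ^ 2 + Real.sqrt (a * b) ^ 2) =
      ((t ^ 2 + a ^ 2) * (t ^ 2 + b ^ 2)) * ((t ^ 2 + a * b) / (4 * t ^ 2)) ^ 2 := by
    rw [Real.sq_sqrt (by positivity : (0:ℝ) ≤ a * b)]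
    field_simp
    ring
  rw [Gr, Gr, hprod, Real.sqrt_mul hX.le, Real.sqrt_sq hq]
  have h2 : 0 < Real.sqrt ((t ^ 2 + a ^ 2) * (t ^ 2 + b ^ 2)) := Real.sqrt_pos.2 hX
  have h3 : 0 < t ^ 2 + a * b := by positivity
  field_simp
  ring

lemma gauss_sub {a b : ℝ} (ha : 0 < a) (hb : 0 < b) :
    2 * (∫ t in Ioi (Real.sqrt (a * b)), Gr a b t) =
      ∫ u in Ioi (0:ℝ), Gr ((a + b) / 2) (Real.sqrt (a * b)) u := by
  set c := Real.sqrt (a * b) with hcdef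
  have hc : 0 < c := Real.sqrt_pos.2 (by positivity)
  have hc2 : c ^ 2 = a * b := Real.sq_sqrt (by positivity)
  have ha1 : 0 < (a + b) / 2 := by positivity
  set f : ℝ → ℝ := fun t => (t - a * b / t) / 2 with hfdef
  set f' : ℝ → ℝ := fun t => (1 + a * b / t ^ 2) / 2 with hf'def
  have hne : ∀ x ∈ Ici c, x ≠ 0 := fun x hx => ne_of_gt (lt_of_lt_of_le hc hx)
  have hf : ContinuousOn f (Ici c) := by
    apply ContinuousOn.div _ continuousOn_const (by norm_num)
    exact (continuousOn_id.sub (ContinuousOn.div continuousOn_const continuousOn_id hne))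
  have hC0 : Tendsto (fun t : ℝ => a * b / t) atTop (𝓝 0) :=
    Tendsto.div_atTop tendsto_const_nhds tendsto_id
  have hft : Tendsto f atTop atTop := by
    have h1 : Tendsto (fun t : ℝ => -(a * b / t) + t) atTop atTop :=
      (hC0.neg).add_atTop tendsto_id
    have h2 := h1.atTop_div_const (by norm_num : (0:ℝ) < 2)
    exact h2.congr fun t => by rw [hfdef]; ring
  have hff' : ∀ x ∈ Ioi c, HasDerivWithinAt f (f' x) (Ioi x) x := by
    intro x hx
    have hx0 : (0:ℝ) < x := lt_trans hc hx
    have h := ((hasDerivAt_id x).sub ((hasDerivAt_inv hx0.ne').const_mul (a * b))).div_const 2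
    have : HasDerivAt f ((1 - a * b * -(x ^ 2)⁻¹) / 2) x := by
      apply h.congr_deriv rfl
    have heq : (1 - a * b * -(x ^ 2)⁻¹) / 2 = f' x := by
      rw [hf'def]; field_simp; ring
    rw [heq] at this
    exact this.hasDerivWithinAt
  have hb1 : IntegrableOn (Gr ((a + b) / 2) c) (Ici 0) := by
    rw [integrableOn_Ici_iff_integrableOn_Ioi]
    exact Gr_integrableOn ha1 hc
  have himg : f '' Ici c ⊆ Ici 0 := by
    rintro u ⟨t, ht, rfl⟩
    have ht0 : (0:ℝ) < t := lt_of_lt_of_le hc ht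
    have : a * b ≤ t ^ 2 := by
      rw [← hc2]
      exact pow_le_pow_left₀ hc.le ht 2
    have : a * b / t ≤ t := by
      rw [div_le_iff₀ ht0]
      nlinarith
    simp only [hfdef, mem_Ici]
    linarith
  have hg1 : IntegrableOn (Gr ((a + b) / 2) c) (f '' Ici c) := hb1.mono_set himg
  have hkey : ∀ x ∈ Ici c, (fun x => 2 * Gr a b x) x = f' x • (Gr ((a + b) / 2) c ∘ f) x := by
    intro x hx
    have hx0 : (0:ℝ) < x := lt_of_lt_of_le hc hx
    simp only [smul_eq_mul, Function.comp_apply, hfdef, hf'def]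
    exact (gauss_identity ha hb hx0).symm
  have hIci : IntegrableOn (fun x => 2 * Gr a b x) (Ici c) := by
    have : IntegrableOn (Gr a b) (Ici c) := by
      rw [integrableOn_Ici_iff_integrableOn_Ioi]
      exact (Gr_integrableOn ha hb).mono_set (Ioi_subset_Ioi hc.le)
    exact this.const_mul 2
  have hg2 : IntegrableOn (fun x => f' x • (Gr ((a + b) / 2) c ∘ f) x) (Ici c) :=
    hIci.congr_fun hkey measurableSet_Ici
  have hmain := MeasureTheory.integral_comp_smul_deriv_Ioi hf hft hff'
    ((Gr_cont ha1 hc).continuousOn) hg1 hg2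
  have hfc : f c = 0 := by
    rw [hfdef]
    have : a * b / c = c := by rw [← hc2]; field_simp
    simp [this]
  rw [hfc] at hmain
  rw [← hmain]
  rw [← MeasureTheory.setIntegral_congr_fun measurableSet_Ioi
    (fun x hx => hkey x (le_of_lt hx))]
  rw [MeasureTheory.integral_const_mul]

theorem elliptic_integral_agm_invariant (a b : ℝ) (hb : 0 < b) (hab : b < a) :
    (∫ φ in (0:ℝ)..(π / 2), 1 / Real.sqrt (a ^ 2 * Real.cos φ ^ 2 + b ^ 2 * Real.sin φ ^ 2)) =
    ∫ φ in (0:ℝ)..(π / 2),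
      1 / Real.sqrt (((a + b) / 2) ^ 2 * Real.cos φ ^ 2 + Real.sqrt (a * b) ^ 2 * Real.sin φ ^ 2) := by
  have ha : 0 < a := hb.trans hab
  have ha1 : 0 < (a + b) / 2 := by positivity
  have hb1 : 0 < Real.sqrt (a * b) := Real.sqrt_pos.2 (by positivity)
  rw [trig_eq_rational ha hb, rational_symm ha hb, gauss_sub ha hb,
    ← trig_eq_rational ha1 hb1]
end

section
/- For 0 < α ≤ π/2, the complete elliptic integral K with k = sin(α/2) satisfies (α/2)/sin(α/2) ≤ (2/π)·K(sin(α/2)) ≤ √(α/sin α). -/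
open Real

noncomputable def ellipticK (k : ℝ) : ℝ :=
  ∫ φ in (0:ℝ)..(π / 2), 1 / Real.sqrt (1 - k ^ 2 * Real.sin φ ^ 2)

lemma den_pos {k : ℝ} (hk : k^2 < 1) (φ : ℝ) : 0 < 1 - k^2 * Real.sin φ ^ 2 := by
  nlinarith [Real.sin_sq_le_one φ, sq_nonneg k, sq_nonneg (Real.sin φ)]

lemma cont_f {k : ℝ} (hk : k^2 < 1) :
    Continuous (fun φ : ℝ => 1 / Real.sqrt (1 - k^2 * Real.sin φ ^ 2)) := by
  apply Continuous.div continuous_const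
  · exact (continuous_const.sub (continuous_const.mul ((Real.continuous_sin).pow 2))).sqrt
  · intro φ
    exact (Real.sqrt_pos.mpr (den_pos hk φ)).ne'

-- L2
lemma integral_cos_f {k : ℝ} (hk0 : 0 < k) (hk : k^2 < 1) :
    ∫ φ in (0:ℝ)..(π/2), Real.cos φ * (1 / Real.sqrt (1 - k^2 * Real.sin φ ^ 2))
      = Real.arcsin k / k := by
  have habs : ∀ φ : ℝ, |k * Real.sin φ| < 1 := by
    intro φ
    have h1 : |Real.sin φ| ≤ 1 := Real.abs_sin_le_one φ
    have h2 : |k| < 1 := by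
      rw [abs_lt]; constructor <;> nlinarith
    calc |k * Real.sin φ| = |k| * |Real.sin φ| := abs_mul _ _
      _ ≤ |k| * 1 := by nlinarith [abs_nonneg k]
      _ < 1 := by linarith
  have hderiv : ∀ φ ∈ Set.uIcc (0:ℝ) (π/2),
      HasDerivAt (fun x => Real.arcsin (k * Real.sin x) / k)
        (Real.cos φ * (1 / Real.sqrt (1 - k^2 * Real.sin φ ^ 2))) φ := by
    intro φ _
    have h := (Real.hasDerivAt_arcsin
        (by have := habs φ; rw [abs_lt] at this; linarith [this.1])
        (by have := habs φ; rw [abs_lt] at this; linarith [this.2])).comp φ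
        ((Real.hasDerivAt_sin φ).const_mul k)
    have h2 := h.div_const k
    refine h2.congr_deriv ?_
    symm
    have : 1 - (k * Real.sin φ)^2 = 1 - k^2 * Real.sin φ^2 := by ring
    rw [this, one_div, mul_comm k (Real.cos φ), ← mul_assoc, mul_div_assoc,
      div_self hk0.ne', mul_one, mul_comm]
  rw [intervalIntegral.integral_eq_sub_of_hasDerivAt hderiv]
  · simp [Real.sin_pi_div_two]
  · apply Continuous.intervalIntegrable
    exact Real.continuous_cos.mul (cont_f hk)

lemma aux_div (N u v : ℝ) (hv : v ≠ 0) :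
    1/(1+(u/v)^2) * (N/v^2) = N / (v^2 + u^2) := by
  have hD : v^2 + u^2 ≠ 0 := by positivity
  field_simp

lemma aux2 (N D A c : ℝ) (hD : D ≠ 0) (hA : A ≠ 0) (h : (D + N)*A = c*D) :
    (1 + N/D)*A = c := by
  field_simp
  linear_combination h

lemma integral_f_sq {k : ℝ} (hk : k^2 < 1) :
    ∫ φ in (0:ℝ)..(π/2), (1 - k^2 * Real.sin φ ^ 2)⁻¹
      = π / (2 * Real.sqrt (1 - k^2)) := by
  set c := Real.sqrt (1 - k^2) with hc_def
  have hc : 0 < c := Real.sqrt_pos.mpr (by nlinarith)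
  have hc2 : c^2 = 1 - k^2 := Real.sq_sqrt (by nlinarith)
  have hvpos : ∀ x : ℝ, 0 < Real.cos x^2 + c * Real.sin x^2 := by
    intro x
    nlinarith [Real.sin_sq_add_cos_sq x, sq_nonneg (Real.sin x), sq_nonneg (Real.cos x)]
  have hderiv : ∀ φ ∈ Set.uIcc (0:ℝ) (π/2),
      HasDerivAt (fun x => (x + Real.arctan ((c-1) * (Real.sin x * Real.cos x) /
          (Real.cos x^2 + c * Real.sin x^2))) / c)
        ((1 - k^2 * Real.sin φ ^ 2)⁻¹) φ := by
    intro φ _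
    set s := Real.sin φ
    set t := Real.cos φ
    have hst : s^2 + t^2 = 1 := Real.sin_sq_add_cos_sq φ
    have hv : (0:ℝ) < t^2 + c * s^2 := hvpos φ
    have hu : HasDerivAt (fun x => (c-1) * (Real.sin x * Real.cos x))
        ((c-1) * (Real.cos φ * Real.cos φ + Real.sin φ * (-Real.sin φ))) φ :=
      ((Real.hasDerivAt_sin φ).mul (Real.hasDerivAt_cos φ)).const_mul (c-1)
    have hv' : HasDerivAt (fun x => Real.cos x^2 + c * Real.sin x^2)
        (2 * Real.cos φ * (-Real.sin φ) + c * (2 * Real.sin φ * Real.cos φ)) φ := by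
      have h1 : HasDerivAt (fun x => Real.cos x^2) (2 * Real.cos φ * (-Real.sin φ)) φ := by
        have := (Real.hasDerivAt_cos φ).pow 2
        exact this.congr_deriv (by push_cast; ring)
      have h2 : HasDerivAt (fun x => Real.sin x^2) (2 * Real.sin φ * Real.cos φ) φ := by
        have := (Real.hasDerivAt_sin φ).pow 2
        exact this.congr_deriv (by push_cast; ring)
      exact h1.add (h2.const_mul c)
    have hw := hu.div hv' hv.ne'
    have harc := (Real.hasDerivAt_arctan ((c-1) * (s * t) / (t^2 + c*s^2))).comp φ hw
    have hG := ((hasDerivAt_id φ).add harc).div_const c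
    refine hG.congr_deriv ?_
    symm
    set u := (c-1) * (s * t) with hu_def
    set v := t^2 + c * s^2 with hv_def
    have hDpos : (0:ℝ) < v^2 + u^2 := by positivity
    have hden : (0:ℝ) < 1 - k^2 * s^2 := by nlinarith [sq_nonneg s, sq_nonneg t, sq_nonneg k]
    have hk2 : k^2 = 1 - c^2 := by linarith
    -- target: (1 - k^2 s^2)⁻¹ = (1 + (1/(1+w^2)) * ((u' v - u v')/v^2))/c
    have key : ((v^2 + u^2) + ((c-1) * (t * t + s * (-s)) * v
          - u * (2 * t * (-s) + c * (2 * s * t)))) * (1 - k^2 * s^2)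
        = c * (v^2 + u^2) := by
      rw [hk2, hu_def, hv_def]
      linear_combination (c*(c^2-1)*s^2*(s^2+t^2)) * hst
    rw [eq_comm, div_eq_iff hc.ne', inv_mul_eq_div, eq_div_iff hden.ne',
      aux_div _ _ _ hv.ne']
    exact aux2 _ _ _ _ hDpos.ne' hden.ne' key
  rw [intervalIntegral.integral_eq_sub_of_hasDerivAt hderiv]
  · simp [Real.sin_pi_div_two, Real.cos_pi_div_two]
    ring
  · apply Continuous.intervalIntegrable
    have : ∀ x : ℝ, (0:ℝ) < 1 - k^2 * Real.sin x ^ 2 := by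
      intro x; nlinarith [Real.sin_sq_le_one x, sq_nonneg k, sq_nonneg (Real.sin x)]
    exact (continuous_const.sub (continuous_const.mul ((Real.continuous_sin).pow 2))).inv₀
      (fun x => (this x).ne')

lemma f_mono {k x y : ℝ} (hk : k^2 < 1) (h : Real.sin x ^ 2 ≤ Real.sin y ^ 2) :
    1 / Real.sqrt (1 - k^2 * Real.sin x ^ 2) ≤ 1 / Real.sqrt (1 - k^2 * Real.sin y ^ 2) := by
  have hy := den_pos hk y
  have hx := den_pos hk x
  have h1 : 1 - k^2 * Real.sin y ^ 2 ≤ 1 - k^2 * Real.sin x ^ 2 := by nlinarith [sq_nonneg k]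
  have h2 : Real.sqrt (1 - k^2 * Real.sin y ^ 2) ≤ Real.sqrt (1 - k^2 * Real.sin x ^ 2) :=
    Real.sqrt_le_sqrt h1
  exact one_div_le_one_div_of_le (Real.sqrt_pos.mpr hy) h2

lemma lower_int {k : ℝ} (hk : k^2 < 1) :
    0 ≤ ∫ φ in (0:ℝ)..(π/2),
      (1 - π/2 * Real.cos φ) * (1 / Real.sqrt (1 - k^2 * Real.sin φ ^ 2)) := by
  have hπ : (2:ℝ) < π := by linarith [Real.pi_gt_three]
  have h2π0 : (0:ℝ) < 2/π := by positivity
  have h2π1 : (2:ℝ)/π < 1 := by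
    rw [div_lt_one (by linarith)]; linarith
  set φ₀ := Real.arccos (2/π) with hφ₀
  have hcos0 : Real.cos φ₀ = 2/π := Real.cos_arccos (by linarith) (by linarith)
  set c0 := 1 / Real.sqrt (1 - k^2 * Real.sin φ₀ ^ 2) with hc0
  -- pointwise nonneg
  have hpt : ∀ φ ∈ Set.Icc (0:ℝ) (π/2),
      0 ≤ (1 - π/2 * Real.cos φ) * (1 / Real.sqrt (1 - k^2 * Real.sin φ ^ 2) - c0) := by
    intro φ hφ
    have hcφ : 0 ≤ Real.cos φ := Real.cos_nonneg_of_mem_Icc ⟨by linarith [hφ.1], hφ.2⟩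
    have hsin2 : Real.sin φ ^ 2 = 1 - Real.cos φ ^ 2 := by
      nlinarith [Real.sin_sq_add_cos_sq φ]
    have hsin02 : Real.sin φ₀ ^ 2 = 1 - (2/π) ^ 2 := by
      nlinarith [Real.sin_sq_add_cos_sq φ₀, hcos0]
    have hππ : π/2 * (2/π) = 1 := by field_simp
    rcases le_total (Real.cos φ) (2/π) with h | h
    · have hfac : 0 ≤ 1 - π/2 * Real.cos φ := by
        have := mul_le_mul_of_nonneg_left h (by positivity : (0:ℝ) ≤ π/2)
        linarith
      apply mul_nonneg hfac
      have hss : Real.sin φ₀ ^ 2 ≤ Real.sin φ ^ 2 := by nlinarith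
      have := f_mono hk hss
      linarith
    · have hfac : 1 - π/2 * Real.cos φ ≤ 0 := by
        have := mul_le_mul_of_nonneg_left h (by positivity : (0:ℝ) ≤ π/2)
        linarith
      have hss : Real.sin φ ^ 2 ≤ Real.sin φ₀ ^ 2 := by nlinarith
      have hf := f_mono (x := φ) (y := φ₀) hk hss
      nlinarith [mul_nonneg (neg_nonneg.2 hfac) (sub_nonneg.2 hf)]
  have hint1 : IntervalIntegrable
      (fun φ => (1 - π/2 * Real.cos φ) * (1 / Real.sqrt (1 - k^2 * Real.sin φ ^ 2) - c0))
      MeasureTheory.volume 0 (π/2) := by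
    apply Continuous.intervalIntegrable
    exact (continuous_const.sub (continuous_const.mul Real.continuous_cos)).mul
      ((cont_f hk).sub continuous_const)
  have hg0 : ∫ φ in (0:ℝ)..(π/2), (1 - π/2 * Real.cos φ) = 0 := by
    rw [intervalIntegral.integral_sub intervalIntegrable_const
      ((show Continuous fun φ : ℝ => π/2 * Real.cos φ from continuous_const.mul Real.continuous_cos).intervalIntegrable _ _),
      intervalIntegral.integral_const_mul, integral_cos]
    simp
  have hgc0 : ∫ φ in (0:ℝ)..(π/2), c0 * (1 - π/2 * Real.cos φ) = 0 := by
    rw [intervalIntegral.integral_const_mul, hg0, mul_zero]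
  have key : ∫ φ in (0:ℝ)..(π/2),
      (1 - π/2 * Real.cos φ) * (1 / Real.sqrt (1 - k^2 * Real.sin φ ^ 2))
      = (∫ φ in (0:ℝ)..(π/2),
          (1 - π/2 * Real.cos φ) * (1 / Real.sqrt (1 - k^2 * Real.sin φ ^ 2) - c0))
        + ∫ φ in (0:ℝ)..(π/2), c0 * (1 - π/2 * Real.cos φ) := by
    rw [← intervalIntegral.integral_add hint1]
    · congr 1
      funext φ
      ring
    · apply Continuous.intervalIntegrable
      exact continuous_const.mul (continuous_const.sub (continuous_const.mul Real.continuous_cos))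
  rw [key, hgc0, add_zero]
  exact intervalIntegral.integral_nonneg (by positivity) hpt

lemma ellipticK_nonneg {k : ℝ} (hk : k^2 < 1) : 0 ≤ ellipticK k := by
  apply intervalIntegral.integral_nonneg (by positivity)
  intro u _
  positivity

lemma cs_bound {k : ℝ} (hk : k^2 < 1) :
    (ellipticK k)^2 ≤ π/2 * (π / (2 * Real.sqrt (1 - k^2))) := by
  set K := ellipticK k with hK
  set b := 2*K/π with hb
  have hπ : (0:ℝ) < π := Real.pi_pos
  have hf_int : IntervalIntegrable (fun φ : ℝ => 1 / Real.sqrt (1 - k^2 * Real.sin φ ^ 2))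
      MeasureTheory.volume 0 (π/2) := (cont_f hk).intervalIntegrable _ _
  have hf2_int : IntervalIntegrable (fun φ : ℝ => (1 / Real.sqrt (1 - k^2 * Real.sin φ ^ 2))^2)
      MeasureTheory.volume 0 (π/2) := ((cont_f hk).pow 2).intervalIntegrable _ _
  have h0 : 0 ≤ ∫ φ in (0:ℝ)..(π/2),
      (1 / Real.sqrt (1 - k^2 * Real.sin φ ^ 2) - b)^2 :=
    intervalIntegral.integral_nonneg (by positivity) (fun u _ => sq_nonneg _)
  have hexp : ∫ φ in (0:ℝ)..(π/2), (1 / Real.sqrt (1 - k^2 * Real.sin φ ^ 2) - b)^2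
      = (∫ φ in (0:ℝ)..(π/2), (1 / Real.sqrt (1 - k^2 * Real.sin φ ^ 2))^2)
        - 2*b*K + b^2*(π/2) := by
    have : (fun φ : ℝ => (1 / Real.sqrt (1 - k^2 * Real.sin φ ^ 2) - b)^2)
        = fun φ : ℝ => ((1 / Real.sqrt (1 - k^2 * Real.sin φ ^ 2))^2
            - (2*b) * (1 / Real.sqrt (1 - k^2 * Real.sin φ ^ 2)) + b^2) := by
      funext φ; ring
    rw [this, intervalIntegral.integral_add (hf2_int.sub ((hf_int.const_mul (2*b))))
        intervalIntegrable_const,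
      intervalIntegral.integral_sub hf2_int (hf_int.const_mul (2*b)),
      intervalIntegral.integral_const_mul, intervalIntegral.integral_const]
    have hKdef : ∫ φ in (0:ℝ)..(π/2), 1 / Real.sqrt (1 - k^2 * Real.sin φ ^ 2) = K := rfl
    rw [hKdef]
    simp
    ring
  have hfsq : ∫ φ in (0:ℝ)..(π/2), (1 / Real.sqrt (1 - k^2 * Real.sin φ ^ 2))^2
      = π / (2 * Real.sqrt (1 - k^2)) := by
    rw [← integral_f_sq hk]
    apply intervalIntegral.integral_congr
    intro φ _
    have h := den_pos hk φ
    show (1 / Real.sqrt (1 - k^2 * Real.sin φ ^ 2))^2 = (1 - k^2 * Real.sin φ ^ 2)⁻¹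
    rw [div_pow, one_pow, Real.sq_sqrt h.le, one_div]
  rw [hexp, hfsq, hb] at h0
  have hπ2 : π ≠ 0 := hπ.ne'
  have harith : 2*(2*K/π)*K - (2*K/π)^2*(π/2) = 2*K^2/π := by
    field_simp
    ring
  have h1 : 2*K^2/π ≤ π / (2 * Real.sqrt (1 - k^2)) := by linarith
  have h2 := mul_le_mul_of_nonneg_left h1 (by positivity : (0:ℝ) ≤ π/2)
  have h3 : π/2*(2*K^2/π) = K^2 := by field_simp
  linarith

theorem pars_thurston_bounds (α : ℝ) (hα0 : 0 < α) (hα : α ≤ π / 2) :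
    (α / 2) / Real.sin (α / 2) ≤ (2 / π) * ellipticK (Real.sin (α / 2)) ∧
    (2 / π) * ellipticK (Real.sin (α / 2)) ≤ Real.sqrt (α / Real.sin α) := by
  have hπ : (2:ℝ) < π := by linarith [Real.pi_gt_three]
  have hπ0 : (0:ℝ) < π := by linarith
  set a := α/2 with ha_def
  have ha0 : 0 < a := by positivity
  have ha2 : a ≤ π/4 := by rw [ha_def]; linarith
  have haπ2 : a < π/2 := by linarith
  have hk0 : 0 < Real.sin a := Real.sin_pos_of_pos_of_lt_pi ha0 (by linarith)
  have hca : 0 < Real.cos a := Real.cos_pos_of_mem_Ioo ⟨by linarith, haπ2⟩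
  have hpyth := Real.sin_sq_add_cos_sq a
  have hk : Real.sin a ^ 2 < 1 := by nlinarith
  set k := Real.sin a with hk_def
  set K := ellipticK k with hK_def
  have hKnn : 0 ≤ K := ellipticK_nonneg hk
  have harcsin : Real.arcsin k = a := Real.arcsin_sin (by linarith) (by linarith)
  constructor
  · -- lower bound
    have hli := lower_int hk
    have hf_int : IntervalIntegrable (fun φ : ℝ => 1 / Real.sqrt (1 - k^2 * Real.sin φ ^ 2))
        MeasureTheory.volume 0 (π/2) := (cont_f hk).intervalIntegrable _ _
    have hcf_int : IntervalIntegrable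
        (fun φ : ℝ => Real.cos φ * (1 / Real.sqrt (1 - k^2 * Real.sin φ ^ 2)))
        MeasureTheory.volume 0 (π/2) :=
      (Real.continuous_cos.mul (cont_f hk)).intervalIntegrable _ _
    have hKint : K = ∫ φ in (0:ℝ)..(π/2), 1 / Real.sqrt (1 - k^2 * Real.sin φ ^ 2) := rfl
    have hsplit : ∫ φ in (0:ℝ)..(π/2),
        (1 - π/2 * Real.cos φ) * (1 / Real.sqrt (1 - k^2 * Real.sin φ ^ 2))
        = K - π/2 * ∫ φ in (0:ℝ)..(π/2),
            Real.cos φ * (1 / Real.sqrt (1 - k^2 * Real.sin φ ^ 2)) := by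
      rw [hKint, ← intervalIntegral.integral_const_mul,
        ← intervalIntegral.integral_sub hf_int (hcf_int.const_mul (π/2))]
      congr 1
      funext φ
      ring
    rw [hsplit, integral_cos_f hk0 hk, harcsin] at hli
    have h2 : π/2 * (a/k) ≤ K := by linarith
    have h3 := mul_le_mul_of_nonneg_left h2 (by positivity : (0:ℝ) ≤ 2/π)
    have h4 : 2/π * (π/2 * (a/k)) = a/k := by field_simp
    linarith
  · -- upper bound
    have hcs := cs_bound hk
    have hsqrt1k : Real.sqrt (1 - k^2) = Real.cos a := by
      rw [show 1 - k^2 = Real.cos a^2 by nlinarith, Real.sqrt_sq hca.le]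
    rw [hsqrt1k] at hcs
    have hsinα : Real.sin α = 2*k*Real.cos a := by
      rw [show α = 2*a by rw [ha_def]; ring, Real.sin_two_mul]
    have hsinα0 : 0 < Real.sin α := by rw [hsinα]; positivity
    rw [Real.le_sqrt (by positivity) (by positivity)]
    have hka : k ≤ a := by rw [hk_def]; exact Real.sin_le ha0.le
    have e2 : α / Real.sin α = a/(k*Real.cos a) := by
      rw [hsinα, show α = 2*a by rw [ha_def]; ring,
        div_eq_div_iff (by positivity) (by positivity)]
      ring
    calc (2/π*K)^2 = 4/π^2 * K^2 := by ring
      _ ≤ 4/π^2 * (π/2 * (π/(2*Real.cos a))) := by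
          apply mul_le_mul_of_nonneg_left hcs (by positivity)
      _ = 1/Real.cos a := by field_simp; ring
      _ ≤ a/(k*Real.cos a) := by
          rw [div_le_div_iff₀ (by positivity) (by positivity)]
          nlinarith
      _ = α / Real.sin α := e2.symm
end

section
/- Let 0 < α < π, a = 1, b = cos(α/2), with AGM sequences a_n, b_n and limit μ. Then the relative error R₂ = (a₂ − μ)/a₂ satisfies 0 < R₂ < (1/(2⁶ cos(α/2)))·(sin(α/4) tan(α/4))⁴. -/
open Real Filter

private lemma agm_helper (x y : ℝ) (hx : 0 ≤ x) (hy : 0 ≤ y) :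
    2 * Real.sqrt (x * y) ≤ x + y := by
  have h : Real.sqrt (x * y) ≤ Real.sqrt (((x + y) / 2) ^ 2) :=
    Real.sqrt_le_sqrt (by nlinarith [sq_nonneg (x - y)])
  rw [Real.sqrt_sq (by positivity)] at h
  linarith

theorem ingham_R2_bound (α : ℝ) (hα0 : 0 < α) (hα : α < π)
    (A B : ℕ → ℝ) (hA0 : A 0 = 1) (hB0 : B 0 = Real.cos (α / 2))
    (hA : ∀ n, A (n + 1) = (A n + B n) / 2)
    (hB : ∀ n, B (n + 1) = Real.sqrt (A n * B n))
    (μ : ℝ) (hμA : Tendsto A atTop (nhds μ)) (hμB : Tendsto B atTop (nhds μ)) :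
    0 < (A 2 - μ) / A 2 ∧
    (A 2 - μ) / A 2 <
      (1 / (2 ^ 6 * Real.cos (α / 2))) * (Real.sin (α / 4) * Real.tan (α / 4)) ^ 4 := by
  have hπ := Real.pi_pos
  have hc : 0 < Real.cos (α / 2) :=
    Real.cos_pos_of_mem_Ioo ⟨by linarith, by linarith⟩
  have hs4 : 0 < Real.sin (α / 4) :=
    Real.sin_pos_of_pos_of_lt_pi (by linarith) (by linarith)
  have hk4 : 0 < Real.cos (α / 4) :=
    Real.cos_pos_of_mem_Ioo ⟨by linarith, by linarith⟩
  set c := Real.cos (α / 2) with hcdef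
  set s := Real.sin (α / 4) with hsdef
  set k := Real.cos (α / 4) with hkdef
  have hsk : s ^ 2 + k ^ 2 = 1 := Real.sin_sq_add_cos_sq _
  have h24 : α / 2 = 2 * (α / 4) := by ring
  have hcc : c = 1 - 2 * s ^ 2 := by
    rw [hcdef, h24, Real.cos_two_mul]; nlinarith
  have hck : c = 2 * k ^ 2 - 1 := by
    rw [hcdef, h24, Real.cos_two_mul]
  -- invariant
  have key : ∀ n, 0 < B n ∧ B n < A n := by
    intro n
    induction n with
    | zero =>
      rw [hA0, hB0]
      exact ⟨hc, by nlinarith⟩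
    | succ n ih =>
      obtain ⟨hb, hab⟩ := ih
      have ha : 0 < A n := lt_trans hb hab
      have hb' : 0 < B (n + 1) := by
        rw [hB n]; exact Real.sqrt_pos.mpr (by positivity)
      refine ⟨hb', ?_⟩
      rw [hB n, hA n]
      have h1 : Real.sqrt (A n * B n) ^ 2 = A n * B n := Real.sq_sqrt (by positivity)
      nlinarith [Real.sqrt_nonneg (A n * B n)]
  have hApos : ∀ n, 0 < A n := fun n => lt_trans (key n).1 (key n).2
  have hAstep : ∀ n, A (n + 1) < A n := by
    intro n; rw [hA n]; have := (key n).2; linarith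
  have hBstep : ∀ n, B n < B (n + 1) := by
    intro n
    obtain ⟨hb, hab⟩ := key n
    rw [hB n]
    exact (Real.lt_sqrt hb.le).mpr (by nlinarith)
  have hAanti : ∀ m n, m ≤ n → A n ≤ A m := by
    intro m n h
    induction n with
    | zero => simp_all
    | succ n ih =>
      rcases Nat.lt_or_ge m (n + 1) with h' | h'
      · exact le_trans (hAstep n).le (ih (Nat.lt_succ_iff.mp h'))
      · have : m = n + 1 := le_antisymm h h'
        simp [this]
  have hBmono : ∀ m n, m ≤ n → B m ≤ B n := by
    intro m n h
    induction n with
    | zero => simp_all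
    | succ n ih =>
      rcases Nat.lt_or_ge m (n + 1) with h' | h'
      · exact le_trans (ih (Nat.lt_succ_iff.mp h')) (hBstep n).le
      · have : m = n + 1 := le_antisymm h h'
        simp [this]
  have hμle : ∀ n, μ ≤ A n := by
    intro n
    exact le_of_tendsto hμA (eventually_atTop.2 ⟨n, fun m hm => hAanti n m hm⟩)
  have hμge : ∀ n, B n ≤ μ := by
    intro n
    exact ge_of_tendsto hμB (eventually_atTop.2 ⟨n, fun m hm => hBmono n m hm⟩)
  -- basic values
  have hA1 : A 1 = (1 + c) / 2 := by rw [hA 0, hA0, hB0]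
  have hB1sq : B 1 ^ 2 = c := by
    rw [hB 0, hA0, hB0, one_mul, Real.sq_sqrt hc.le]
  have hB1pos : 0 < B 1 := (key 1).1
  have hA2 : A 2 = (A 1 + B 1) / 2 := hA 1
  have hB2sq : B 2 ^ 2 = A 1 * B 1 := by
    rw [hB 1, Real.sq_sqrt (mul_nonneg (hApos 1).le (key 1).1.le)]
  have hB2pos : 0 < B 2 := (key 2).1
  have hA3 : A 3 = (A 2 + B 2) / 2 := hA 2
  have hA2pos : 0 < A 2 := hApos 2
  have hA3pos : 0 < A 3 := hApos 3
  -- key identities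
  have h1 : 8 * A 2 * (A 1 - B 1) = (1 - c) ^ 2 := by
    rw [hA2, hA1]
    linear_combination (-4 : ℝ) * hB1sq
  have h2 : 8 * A 3 * (A 2 - B 2) = (A 1 - B 1) ^ 2 := by
    rw [hA3, hA2]
    linear_combination (-4 : ℝ) * hB2sq
  -- R2 ≤ (A2 - B2)/(2 A3)
  have hg : Real.sqrt (A 2 * B 2) ≤ μ := by
    have := hμge 3
    rwa [hB 2] at this
  have hgsq : Real.sqrt (A 2 * B 2) ^ 2 = A 2 * B 2 :=
    Real.sq_sqrt (mul_nonneg hA2pos.le hB2pos.le)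
  have hgpos : 0 ≤ Real.sqrt (A 2 * B 2) := Real.sqrt_nonneg _
  have hAMGM : 2 * Real.sqrt (A 2 * B 2) ≤ A 2 + B 2 :=
    agm_helper _ _ hA2pos.le hB2pos.le
  have hstep1 : (A 2 - μ) / A 2 ≤ (A 2 - B 2) / (2 * A 3) := by
    rw [div_le_div_iff₀ hA2pos (by linarith)]
    have hA3eq : 2 * A 3 = A 2 + B 2 := by rw [hA3]; ring
    rw [hA3eq]
    have t1 : 0 ≤ (μ - Real.sqrt (A 2 * B 2)) * (A 2 + B 2) :=
      mul_nonneg (by linarith) (by linarith)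
    have t2 : 0 ≤ Real.sqrt (A 2 * B 2) * (A 2 + B 2 - 2 * Real.sqrt (A 2 * B 2)) :=
      mul_nonneg hgpos (by linarith)
    nlinarith [hgsq]
  -- closed form of the bound
  have hA2ne : A 2 ≠ 0 := hA2pos.ne'
  have hA3ne : A 3 ≠ 0 := hA3pos.ne'
  have e1 : A 1 - B 1 = (1 - c) ^ 2 / (8 * A 2) := by
    field_simp
    linear_combination h1
  have e2 : A 2 - B 2 = (A 1 - B 1) ^ 2 / (8 * A 3) := by
    field_simp
    linear_combination h2
  have heq : (A 2 - B 2) / (2 * A 3) = (1 - c) ^ 4 / (1024 * A 2 ^ 2 * A 3 ^ 2) := by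
    rw [e2, e1]
    field_simp
    ring
  -- final strict inequality
  have hB2ltA2 := (key 2).2
  have hB2ltA3 : B 2 < A 3 := by
    have := hBstep 2
    have h3 := (key 3).2
    linarith
  have hden : c * k ^ 4 < A 2 ^ 2 * A 3 ^ 2 := by
    have hhk : k ^ 2 = (1 + c) / 2 := by linarith [hck]
    have hb4 : B 2 ^ 4 = c * k ^ 4 := by
      have h4 : B 2 ^ 4 = (A 1 * B 1) ^ 2 := by rw [← hB2sq]; ring
      rw [h4, hA1]
      linear_combination ((1 + c) ^ 2 / 4) * hB1sq - (c * ((1 + c) / 2 + k ^ 2)) * hhk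
    rw [← hb4]
    have p1 : B 2 * B 2 < A 2 * A 3 :=
      mul_lt_mul'' hB2ltA2 hB2ltA3 hB2pos.le hB2pos.le
    calc B 2 ^ 4 = (B 2 * B 2) ^ 2 := by ring
      _ < (A 2 * A 3) ^ 2 := by
          apply pow_lt_pow_left₀ p1 (by positivity)
          norm_num
      _ = A 2 ^ 2 * A 3 ^ 2 := by ring
  have hrhs : (1 / (2 ^ 6 * c)) * (s * Real.tan (α / 4)) ^ 4 = s ^ 8 / (64 * c * k ^ 4) := by
    rw [Real.tan_eq_sin_div_cos, ← hsdef, ← hkdef]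
    field_simp
    ring
  have h1c : 1 - c = 2 * s ^ 2 := by rw [hcc]; ring
  have hstep2 : (1 - c) ^ 4 / (1024 * A 2 ^ 2 * A 3 ^ 2) < s ^ 8 / (64 * c * k ^ 4) := by
    have d1 : (0:ℝ) < 1024 * A 2 ^ 2 * A 3 ^ 2 :=
      mul_pos (mul_pos (by norm_num) (pow_pos hA2pos 2)) (pow_pos hA3pos 2)
    have d2 : (0:ℝ) < 64 * c * k ^ 4 :=
      mul_pos (mul_pos (by norm_num) hc) (pow_pos hk4 4)
    rw [div_lt_div_iff₀ d1 d2, h1c]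
    have hmul : s ^ 8 * (c * k ^ 4) < s ^ 8 * (A 2 ^ 2 * A 3 ^ 2) :=
      mul_lt_mul_of_pos_left hden (pow_pos hs4 8)
    calc (2 * s ^ 2) ^ 4 * (64 * c * k ^ 4) = 1024 * (s ^ 8 * (c * k ^ 4)) := by ring
      _ < 1024 * (s ^ 8 * (A 2 ^ 2 * A 3 ^ 2)) := by linarith
      _ = s ^ 8 * (1024 * A 2 ^ 2 * A 3 ^ 2) := by ring
  constructor
  · have hμlt : μ < A 2 := lt_of_le_of_lt (hμle 3) (hAstep 2)
    exact div_pos (by linarith) hA2pos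
  · calc (A 2 - μ) / A 2 ≤ (A 2 - B 2) / (2 * A 3) := hstep1
      _ = (1 - c) ^ 4 / (1024 * A 2 ^ 2 * A 3 ^ 2) := heq
      _ < s ^ 8 / (64 * c * k ^ 4) := hstep2
      _ = (1 / (2 ^ 6 * c)) * (s * Real.tan (α / 4)) ^ 4 := hrhs.symm
end

section
/- Let 0 < α < π, a = 1, b = cos(α/2), with AGM sequences a_n, b_n and limit μ. Then the relative error R₃ = (a₃ − μ)/a₃ satisfies 0 < R₃ < (1/(2¹⁴ cos²(α/2)))·(sin(α/4) tan(α/4))⁸. -/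
open Real Filter

theorem ingham_R3_bound (α : ℝ) (hα0 : 0 < α) (hα : α < π)
    (A B : ℕ → ℝ) (hA0 : A 0 = 1) (hB0 : B 0 = Real.cos (α / 2))
    (hA : ∀ n, A (n + 1) = (A n + B n) / 2)
    (hB : ∀ n, B (n + 1) = Real.sqrt (A n * B n))
    (μ : ℝ) (hμA : Tendsto A atTop (nhds μ)) (hμB : Tendsto B atTop (nhds μ)) :
    0 < (A 3 - μ) / A 3 ∧
    (A 3 - μ) / A 3 <
      (1 / (2 ^ 14 * Real.cos (α / 2) ^ 2)) * (Real.sin (α / 4) * Real.tan (α / 4)) ^ 8 := by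
  have hπ := Real.pi_pos
  have hb0pos : 0 < Real.cos (α / 2) :=
    Real.cos_pos_of_mem_Ioo ⟨by linarith, by linarith⟩
  have hb0lt : Real.cos (α / 2) < 1 := by
    have := Real.cos_lt_cos_of_nonneg_of_le_pi (le_refl 0) (by linarith : α / 2 ≤ π)
      (by linarith : (0:ℝ) < α / 2)
    simpa using this
  -- basic invariant
  have hinv : ∀ n, 0 < B n ∧ B n < A n := by
    intro n
    induction n with
    | zero => exact ⟨by rw [hB0]; exact hb0pos, by rw [hA0, hB0]; exact hb0lt⟩
    | succ n ih =>
      obtain ⟨hb, hba⟩ := ih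
      have ha : 0 < A n := hb.trans hba
      constructor
      · rw [hB]; exact Real.sqrt_pos.mpr (mul_pos ha hb)
      · rw [hA, hB]
        have h1 : A n * B n < ((A n + B n) / 2) ^ 2 := by nlinarith
        have h2 : Real.sqrt (A n * B n) < Real.sqrt (((A n + B n) / 2) ^ 2) :=
          Real.sqrt_lt_sqrt (by positivity) h1
        rwa [Real.sqrt_sq (by positivity)] at h2
  have hApos : ∀ n, 0 < A n := fun n => (hinv n).1.trans (hinv n).2
  have hAstep : ∀ n, A (n + 1) < A n := fun n => by
    rw [hA]; linarith [(hinv n).2]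
  have hAanti : Antitone A := antitone_nat_of_succ_le fun n => (hAstep n).le
  have hBstep : ∀ n, B n < B (n + 1) := fun n => by
    obtain ⟨hb, hba⟩ := hinv n
    rw [hB]
    have h1 : Real.sqrt (B n * B n) < Real.sqrt (A n * B n) :=
      Real.sqrt_lt_sqrt (by positivity) (by nlinarith)
    rwa [Real.sqrt_mul_self hb.le] at h1
  have hBmono : Monotone B := monotone_nat_of_le_succ fun n => (hBstep n).le
  have hμleA : ∀ n, μ ≤ A n := fun n =>
    le_of_tendsto hμA (eventually_atTop.mpr ⟨n, fun m hm => hAanti hm⟩)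
  have hBleμ : ∀ n, B n ≤ μ := fun n =>
    ge_of_tendsto hμB (eventually_atTop.mpr ⟨n, fun m hm => hBmono hm⟩)
  -- the key AGM identity
  have hkey : ∀ n, 8 * A (n + 2) * (A (n + 1) - B (n + 1)) = (A n - B n) ^ 2 := by
    intro n
    obtain ⟨hb, hba⟩ := hinv n
    have ha : 0 < A n := hb.trans hba
    have hmul : Real.sqrt (A n * B n) = Real.sqrt (A n) * Real.sqrt (B n) :=
      Real.sqrt_mul ha.le _
    rw [hA (n + 1), hA n, hB n, hmul]
    set sa := Real.sqrt (A n) with hsa_def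
    set sb := Real.sqrt (B n) with hsb_def
    have hsa : sa ^ 2 = A n := Real.sq_sqrt ha.le
    have hsb : sb ^ 2 = B n := Real.sq_sqrt hb.le
    rw [← hsa, ← hsb]
    ring
  have h0 := hkey 0
  have h1 := hkey 1
  have h2 := hkey 2
  have h3 := hkey 3
  norm_num at h0 h1 h2 h3
  have hA3pos := hApos 3
  have hfirst : 0 < (A 3 - μ) / A 3 := by
    have := hμleA 4
    have := hAstep 3
    exact div_pos (by linarith) hA3pos
  refine ⟨hfirst, ?_⟩
  -- explicit values
  have hB2pos : 0 < B 2 := (hinv 2).1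
  have hB3pos : 0 < B 3 := (hinv 3).1
  have hA2pos : 0 < A 2 := hApos 2
  have hA1 : A 1 = (1 + Real.cos (α / 2)) / 2 := by rw [hA 0, hA0, hB0]
  have hB1sq : B 1 ^ 2 = Real.cos (α / 2) := by
    rw [hB 0, hA0, hB0, one_mul]; exact Real.sq_sqrt hb0pos.le
  have hB2sq : B 2 ^ 2 = A 1 * B 1 := by
    rw [hB 1]; exact Real.sq_sqrt (mul_nonneg (hApos 1).le (hinv 1).1.le)
  have hB3sq : B 3 ^ 2 = A 2 * B 2 := by
    rw [hB 2]; exact Real.sq_sqrt (mul_nonneg hA2pos.le hB2pos.le)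
  have hc4pos : 0 < Real.cos (α / 4) :=
    Real.cos_pos_of_mem_Ioo ⟨by linarith, by linarith⟩
  have hcos4sq : Real.cos (α / 4) ^ 2 = (1 + Real.cos (α / 2)) / 2 := by
    have := Real.cos_sq (α / 4)
    have h24 : 2 * (α / 4) = α / 2 := by ring
    rw [h24] at this
    linarith
  have hsin4sq : Real.sin (α / 4) ^ 2 = (1 - Real.cos (α / 2)) / 2 := by
    have h := Real.sin_sq (α / 4)
    rw [hcos4sq] at h
    linarith
  have hB2_8 : B 2 ^ 8 = Real.cos (α / 4) ^ 8 * Real.cos (α / 2) ^ 2 := by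
    have e : B 2 ^ 8 = (B 2 ^ 2) ^ 4 := by ring
    rw [e, hB2sq, hA1]
    have e2 : ((1 + Real.cos (α / 2)) / 2 * B 1) ^ 4
        = ((1 + Real.cos (α / 2)) / 2) ^ 4 * (B 1 ^ 2) ^ 2 := by ring
    rw [e2, hB1sq, ← hcos4sq]
    ring
  have hRHS : (1 / (2 ^ 14 * Real.cos (α / 2) ^ 2)) * (Real.sin (α / 4) * Real.tan (α / 4)) ^ 8
      = (A 0 - B 0) ^ 8 / (2 ^ 22 * B 2 ^ 8) := by
    rw [Real.tan_eq_sin_div_cos, hA0, hB0, hB2_8]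
    have hone : 1 - Real.cos (α / 2) = 2 * Real.sin (α / 4) ^ 2 := by linarith
    rw [hone]
    field_simp
  rw [hRHS, div_lt_iff₀ hA3pos]
  -- pow8 identity
  have hpow8 : (A 0 - B 0) ^ 8 = 2 ^ 21 * A 2 ^ 4 * A 3 ^ 2 * A 4 * (A 3 - B 3) := by
    calc (A 0 - B 0) ^ 8 = ((A 0 - B 0) ^ 2) ^ 4 := by ring
      _ = (8 * A 2 * (A 1 - B 1)) ^ 4 := by rw [h0]
      _ = 8 ^ 4 * A 2 ^ 4 * ((A 1 - B 1) ^ 2) ^ 2 := by ring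
      _ = 8 ^ 4 * A 2 ^ 4 * (8 * A 3 * (A 2 - B 2)) ^ 2 := by rw [h1]
      _ = 8 ^ 6 * A 2 ^ 4 * A 3 ^ 2 * (A 2 - B 2) ^ 2 := by ring
      _ = 8 ^ 6 * A 2 ^ 4 * A 3 ^ 2 * (8 * A 4 * (A 3 - B 3)) := by rw [h2]
      _ = 2 ^ 21 * A 2 ^ 4 * A 3 ^ 2 * A 4 * (A 3 - B 3) := by ring
  -- the s-substitution
  set s := B 3 / B 2 with hs_def
  have hspos : 0 < s := div_pos hB3pos hB2pos
  have hB3eq : B 3 = s * B 2 := by exact (div_mul_cancel₀ (B 3) hB2pos.ne').symm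
  have hA2eq : A 2 = s ^ 2 * B 2 := by
    have h : (s * B 2) ^ 2 = A 2 * B 2 := by rw [← hB3eq]; exact hB3sq
    have h' : (s ^ 2 * B 2) * B 2 = A 2 * B 2 := by linear_combination h
    exact (mul_right_cancel₀ hB2pos.ne' h').symm
  have hs1 : 1 < s := by
    have hlt : B 2 < B 3 := hBstep 2
    rw [hs_def]
    exact (one_lt_div hB2pos).mpr hlt
  have poly : 32 * s + (s ^ 2 - 1) ^ 2 < 32 * s ^ 13 := by
    have hs0 : (0 : ℝ) < s := hspos
    have hs2 : 0 < s ^ 2 - 1 := by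
      have hp : 0 < (s - 1) * (s + 1) := mul_pos (by linarith) (by linarith)
      have he : (s - 1) * (s + 1) = s ^ 2 - 1 := by ring
      linarith
    have hk0 : s ≤ s ^ 11 := by
      calc s = s ^ 1 := (pow_one s).symm
        _ ≤ s ^ 11 := pow_le_pow_right₀ hs1.le (by norm_num)
    have hk1 : 32 * s ≤ 32 * s ^ 11 := by linarith
    have hk2 : s ^ 2 - 1 < 32 * s ^ 11 := by
      have h2le : s ^ 2 ≤ s ^ 11 := pow_le_pow_right₀ hs1.le (by norm_num)
      have h11 : 0 < s ^ 11 := pow_pos hs0 11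
      linarith
    have hk3 : (s ^ 2 - 1) * (s ^ 2 - 1) < (s ^ 2 - 1) * (32 * s ^ 11) :=
      mul_lt_mul_of_pos_left hk2 hs2
    have hk4 : (s ^ 2 - 1) * (32 * s ^ 11) = 32 * s ^ 13 - 32 * s ^ 11 := by ring
    have hk5 : (s ^ 2 - 1) * (s ^ 2 - 1) = (s ^ 2 - 1) ^ 2 := by ring
    linarith
  -- inequalities between terms
  have hB3leA4 : B 3 ≤ A 4 := (hBleμ 3).trans (hμleA 4)
  have hB3leA3 : B 3 ≤ A 3 := (hinv 3).2.le
  have hB2leA5 : B 2 ≤ A 5 := (hBleμ 2).trans (hμleA 5)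
  have hd3 : 0 < A 3 - B 3 := sub_pos.mpr (hinv 3).2
  have hA4pos := hApos 4
  have hA5pos := hApos 5
  have hD3eq : A 3 - B 3 = (A 2 - B 2) ^ 2 / (8 * A 4) := by
    rw [eq_div_iff (by positivity)]
    linear_combination h2
  have h45 : A 4 - B 4 = (A 3 - B 3) ^ 2 / (8 * A 5) := by
    rw [eq_div_iff (by positivity)]
    linear_combination h3
  -- e1 : bound on A3 - B3
  have e1 : A 3 - B 3 ≤ (s ^ 2 - 1) ^ 2 * B 2 / (8 * s) := by
    rw [hD3eq]
    have hnum : (A 2 - B 2) ^ 2 = (s ^ 2 - 1) ^ 2 * B 2 ^ 2 := by rw [hA2eq]; ring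
    rw [hnum, div_le_div_iff₀ (by positivity) (by positivity)]
    have hsb : s * B 2 ≤ A 4 := hB3eq ▸ hB3leA4
    have h' : B 2 * (s * B 2) ≤ B 2 * A 4 := mul_le_mul_of_nonneg_left hsb hB2pos.le
    have h'' := mul_le_mul_of_nonneg_left h' (by positivity : (0:ℝ) ≤ 8 * (s ^ 2 - 1) ^ 2)
    linarith [h'']
  have e4 : (A 3 - B 3) / (8 * B 2) ≤ (s ^ 2 - 1) ^ 2 / (64 * s) := by
    calc (A 3 - B 3) / (8 * B 2) ≤ ((s ^ 2 - 1) ^ 2 * B 2 / (8 * s)) / (8 * B 2) := by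
          gcongr
      _ = (s ^ 2 - 1) ^ 2 / (64 * s) := by
          field_simp
          ring
  have e2 : s ^ 12 / 2 ≤ A 2 ^ 4 * A 3 ^ 3 * A 4 / (2 * B 2 ^ 8) := by
    rw [le_div_iff₀ (by positivity)]
    have hsb3 : s * B 2 ≤ A 3 := hB3eq ▸ hB3leA3
    have hsb4 : s * B 2 ≤ A 4 := hB3eq ▸ hB3leA4
    have hsbpos : 0 < s * B 2 := mul_pos hspos hB2pos
    have h34 : (s * B 2) ^ 3 * (s * B 2) ≤ A 3 ^ 3 * A 4 := by
      gcongr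
    calc s ^ 12 / 2 * (2 * B 2 ^ 8) = (s ^ 2 * B 2) ^ 4 * ((s * B 2) ^ 3 * (s * B 2)) := by ring
      _ ≤ (s ^ 2 * B 2) ^ 4 * (A 3 ^ 3 * A 4) := by
          gcongr
      _ = A 2 ^ 4 * A 3 ^ 3 * A 4 := by rw [hA2eq]; ring
  have e3 : 1 / 2 + (s ^ 2 - 1) ^ 2 / (64 * s) < s ^ 12 / 2 := by
    have h64 : (0 : ℝ) < 64 * s := by positivity
    rw [show (1 : ℝ) / 2 + (s ^ 2 - 1) ^ 2 / (64 * s) = (32 * s + (s ^ 2 - 1) ^ 2) / (64 * s) by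
        field_simp; ring,
      show s ^ 12 / 2 = 32 * s ^ 13 / (64 * s) by field_simp; ring]
    gcongr
  have core : 1 / 2 + (A 3 - B 3) / (8 * B 2) < A 2 ^ 4 * A 3 ^ 3 * A 4 / (2 * B 2 ^ 8) := by
    linarith [e2, e3, e4]
  calc A 3 - μ ≤ A 3 - B 4 := by linarith [hBleμ 4]
    _ = (A 3 - B 3) / 2 + (A 4 - B 4) := by
        have := hA 3
        linarith
    _ ≤ (A 3 - B 3) / 2 + (A 3 - B 3) ^ 2 / (8 * B 2) := by
        rw [h45]
        gcongr
    _ = (1 / 2 + (A 3 - B 3) / (8 * B 2)) * (A 3 - B 3) := by ring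
    _ < (A 2 ^ 4 * A 3 ^ 3 * A 4 / (2 * B 2 ^ 8)) * (A 3 - B 3) :=
        mul_lt_mul_of_pos_right core hd3
    _ = (A 0 - B 0) ^ 8 / (2 ^ 22 * B 2 ^ 8) * A 3 := by
        rw [hpow8]
        field_simp
end

section
/- For 0 < α < π, the complete elliptic integral satisfies K(sin(α/2)) = (1/cos²(α/4)) · K(tan²(α/4)). Consequently a pendulum of length l and maximum angular displacement α has the same period as a pendulum of length l/cos⁴(α/4) and maximum angular displacement α₁ = 2 arcsin(tan²(α/4)), and α₁ < α. -/
open Real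

open MeasureTheory Set in
/-- The integral `∫ dθ / √(a² cos²θ + b² sin²θ)` over `(0, π/2)`. -/
noncomputable def trigI (a b : ℝ) : ℝ :=
  ∫ θ in Ioo (0:ℝ) (π/2), 1 / Real.sqrt (a^2 * Real.cos θ^2 + b^2 * Real.sin θ^2)

open MeasureTheory Set in
/-- The integral `∫ dx / √((x²+a²)(x²+b²))` over `(0, ∞)`. -/
noncomputable def ratJ (a b : ℝ) : ℝ :=
  ∫ x in Ioi (0:ℝ), 1 / Real.sqrt ((x^2+a^2) * (x^2+b^2))

open MeasureTheory Set in
lemma trigI_eq_ratJ (a b : ℝ) (ha : 0 < a) (hb : 0 < b) : trigI a b = ratJ a b := by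
  have himg : (fun x => arctan (x / b)) '' Ioi 0 = Ioo (0:ℝ) (π/2) := by
    ext θ; constructor
    · rintro ⟨x, hx, rfl⟩
      refine ⟨?_, arctan_lt_pi_div_two _⟩
      have := Real.arctan_strictMono (div_pos hx hb)
      simpa using this
    · rintro ⟨h1, h2⟩
      refine ⟨b * tan θ, mul_pos hb (tan_pos_of_pos_of_lt_pi_div_two h1 h2), ?_⟩
      show arctan (b * tan θ / b) = θ
      rw [mul_div_cancel_left₀ _ hb.ne', arctan_tan (by linarith [pi_pos]) h2]
  have hderiv : ∀ x ∈ Ioi (0:ℝ), HasDerivWithinAt (fun x => arctan (x / b))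
      (1 / (1 + (x/b)^2) * (1/b)) (Ioi 0) x := by
    intro x _
    exact ((hasDerivAt_arctan (x/b)).comp x ((hasDerivAt_id x).div_const b)).hasDerivWithinAt
  have hinj : InjOn (fun x => arctan (x / b)) (Ioi 0) :=
    fun x _ y _ h => by
      have := arctan_injective h
      field_simp at this; exact this
  have := MeasureTheory.integral_image_eq_integral_abs_deriv_smul measurableSet_Ioi hderiv hinj
    (fun θ => 1 / Real.sqrt (a^2 * Real.cos θ^2 + b^2 * Real.sin θ^2))
  rw [himg] at this
  rw [trigI, this, ratJ]
  refine setIntegral_congr_fun measurableSet_Ioi (fun x hx => ?_)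
  have hx0 : (0:ℝ) < x := hx
  rw [cos_arctan, sin_arctan]
  have h1 : (0:ℝ) < 1 + (x/b)^2 := by positivity
  have hE : a^2 * (1 / Real.sqrt (1+(x/b)^2))^2 + b^2 * (x/b / Real.sqrt (1+(x/b)^2))^2
      = (a^2 + x^2) / (1 + (x/b)^2) := by
    have hs : Real.sqrt (1+(x/b)^2)^2 = 1+(x/b)^2 := Real.sq_sqrt h1.le
    rw [show a^2 * (1 / Real.sqrt (1+(x/b)^2))^2 + b^2 * (x/b / Real.sqrt (1+(x/b)^2))^2
        = (a^2 + b^2*(x/b)^2) / Real.sqrt (1+(x/b)^2)^2 by ring, hs]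
    congr 1; field_simp
  rw [hE]
  have hP : (x^2+a^2) * (x^2+b^2) = ((1+(x/b)^2) * b)^2 * ((a^2 + x^2) / (1 + (x/b)^2)) := by
    field_simp; ring
  rw [hP, Real.sqrt_mul (sq_nonneg _), Real.sqrt_sq (by positivity)]
  have hq : (0:ℝ) < Real.sqrt ((a^2 + x^2) / (1 + (x/b)^2)) := Real.sqrt_pos.2 (by positivity)
  rw [abs_of_pos (by positivity)]
  simp only [smul_eq_mul]
  field_simp

open MeasureTheory Set in
/-- The arithmetic-geometric-mean invariance of the integral `ratJ`, proved via the
Gauss substitution `u = (x - ab/x)/2`. -/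
lemma ratJ_agm (a b : ℝ) (ha : 0 < a) (hb : 0 < b) :
    ratJ a b = ratJ ((a+b)/2) (Real.sqrt (a*b)) := by
  set a1 := (a+b)/2 with ha1def
  set b1 := Real.sqrt (a*b) with hb1def
  have hab : (0:ℝ) < a*b := mul_pos ha hb
  have hb1sq : b1^2 = a*b := Real.sq_sqrt hab.le
  set G : ℝ → ℝ := fun u => 1 / Real.sqrt ((u^2+a1^2) * (u^2+b1^2)) with hG
  have hi : (∫ u, G u) = 2 * ratJ a1 b1 := by
    have h := integral_comp_abs (f := fun t => 1 / Real.sqrt ((t^2+a1^2) * (t^2+b1^2)))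
    simp only [sq_abs] at h
    rw [hG, ratJ]
    exact h
  have hii : (∫ u, G u) = 2 * ratJ a b := by
    set f : ℝ → ℝ := fun x => (x - a*b/x)/2 with hf
    set f' : ℝ → ℝ := fun x => (1 + a*b/x^2)/2 with hf'
    have himg : f '' Ioi 0 = univ := by
      refine eq_univ_of_forall (fun u => ?_)
      have hrpos : |u| < Real.sqrt (u^2 + a*b) := by
        rw [← Real.sqrt_sq_eq_abs]
        exact Real.sqrt_lt_sqrt (sq_nonneg u) (by linarith)
      have hx0 : 0 < u + Real.sqrt (u^2 + a*b) := by
        have := abs_nonneg u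
        have := neg_abs_le u
        linarith
      refine ⟨u + Real.sqrt (u^2 + a*b), hx0, ?_⟩
      have hs : Real.sqrt (u^2 + a*b)^2 = u^2 + a*b := Real.sq_sqrt (by positivity)
      show (u + Real.sqrt (u^2+a*b) - a*b/(u + Real.sqrt (u^2+a*b)))/2 = u
      field_simp
      nlinarith [hs]
    have hderiv : ∀ x ∈ Ioi (0:ℝ), HasDerivWithinAt f (f' x) (Ioi 0) x := by
      intro x hx
      have hx0 : (0:ℝ) < x := hx
      have h1 : HasDerivAt (fun x : ℝ => (x - a*b/x)/2) ((1 - a*b * (-(x^2)⁻¹))/2) x := by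
        exact (((hasDerivAt_id x).sub ((hasDerivAt_inv hx0.ne').const_mul (a*b))).div_const 2)
      have : (1 - a*b * (-(x^2)⁻¹))/2 = f' x := by
        rw [hf']; field_simp; ring
      rw [← this]
      exact h1.hasDerivWithinAt
    have hinj : InjOn f (Ioi 0) := by
      have hmono : StrictMonoOn f (Ioi 0) := by
        intro x hx y hy hxy
        have hx0 : (0:ℝ) < x := hx
        have hy0 : (0:ℝ) < y := hy
        have h2 : a*b/y ≤ a*b/x := div_le_div_of_nonneg_left hab.le hx0 hxy.le
        show (x - a*b/x)/2 < (y - a*b/y)/2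
        linarith
      exact hmono.injOn
    have := MeasureTheory.integral_image_eq_integral_abs_deriv_smul measurableSet_Ioi hderiv hinj G
    rw [himg, Measure.restrict_univ] at this
    rw [this, ratJ, ← MeasureTheory.integral_const_mul]
    refine setIntegral_congr_fun measurableSet_Ioi (fun x hx => ?_)
    have hx0 : (0:ℝ) < x := hx
    have hfx : f x = (x - a*b/x)/2 := rfl
    have hfx' : f' x = (1 + a*b/x^2)/2 := rfl
    have hkey1 : (f x)^2 + a1^2 = (x^2+a^2)*(x^2+b^2)/(4*x^2) := by
      rw [hfx, ha1def]; field_simp; ring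
    have hkey2 : (f x)^2 + b1^2 = (x^2+a*b)^2/(4*x^2) := by
      rw [hfx, hb1sq]; field_simp; ring
    have hQpos : (0:ℝ) < (x^2+a^2)*(x^2+b^2) := by positivity
    rw [hG]
    simp only [smul_eq_mul]
    rw [hkey1, hkey2]
    have hfact : (x^2+a^2)*(x^2+b^2)/(4*x^2) * ((x^2+a*b)^2/(4*x^2))
        = ((x^2+a*b)/(4*x^2))^2 * ((x^2+a^2)*(x^2+b^2)) := by
      field_simp
    rw [hfact, Real.sqrt_mul (sq_nonneg _), Real.sqrt_sq (by positivity)]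
    rw [hfx', abs_of_pos (by positivity)]
    have hs : (0:ℝ) < Real.sqrt ((x^2+a^2)*(x^2+b^2)) := Real.sqrt_pos.2 hQpos
    field_simp
    ring
  have h2 : 2 * ratJ a1 b1 = 2 * ratJ a b := by rw [← hi, hii]
  linarith

open MeasureTheory Set in
lemma trigI_scale (l a b : ℝ) (hl : 0 < l) :
    trigI (l*a) (l*b) = (1/l) * trigI a b := by
  rw [trigI, trigI, ← MeasureTheory.integral_const_mul]
  refine setIntegral_congr_fun measurableSet_Ioo (fun θ _ => ?_)
  have : (l*a)^2 * Real.cos θ^2 + (l*b)^2 * Real.sin θ^2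
      = l^2 * (a^2 * Real.cos θ^2 + b^2 * Real.sin θ^2) := by ring
  rw [this, Real.sqrt_mul (sq_nonneg l), Real.sqrt_sq hl.le]
  rw [mul_one_div, div_div]

open MeasureTheory Set in
lemma ellipticK_eq_trigI (k : ℝ) (hk : k^2 ≤ 1) :
    ellipticK k = trigI 1 (Real.sqrt (1 - k^2)) := by
  rw [ellipticK, trigI, intervalIntegral.integral_of_le (by positivity),
    MeasureTheory.integral_Ioc_eq_integral_Ioo]
  refine setIntegral_congr_fun measurableSet_Ioo (fun θ hθ => ?_)
  have h1 : Real.sin θ^2 + Real.cos θ^2 = 1 := sin_sq_add_cos_sq θ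
  have h2 : Real.sqrt (1-k^2)^2 = 1 - k^2 := Real.sq_sqrt (by linarith)
  have harg : 1 - k^2 * Real.sin θ^2
      = 1^2 * Real.cos θ^2 + Real.sqrt (1-k^2)^2 * Real.sin θ^2 := by
    rw [h2]; nlinarith [h1]
  rw [harg]

theorem pendulum_renormalization (α : ℝ) (hα0 : 0 < α) (hα : α < π) :
    ellipticK (Real.sin (α / 2)) =
      (1 / Real.cos (α / 4) ^ 2) * ellipticK (Real.tan (α / 4) ^ 2) ∧
    2 * Real.arcsin (Real.tan (α / 4) ^ 2) < α := by
  have hπ := Real.pi_pos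
  set c := Real.cos (α/2) with hcdef
  have hc : 0 < c := Real.cos_pos_of_mem_Ioo ⟨by linarith, by linarith⟩
  have hc1 : c < 1 := by
    have := Real.cos_lt_cos_of_nonneg_of_le_pi (le_refl 0) (by linarith : α/2 ≤ π)
      (by linarith : (0:ℝ) < α/2)
    simpa using this
  have hs : 0 < Real.sin (α/2) := Real.sin_pos_of_pos_of_lt_pi (by linarith) (by linarith)
  have hs1 : Real.sin (α/2) ≤ 1 := Real.sin_le_one _
  have hssq : Real.sin (α/2)^2 = 1 - c^2 := by
    have := Real.sin_sq_add_cos_sq (α/2); linarith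
  -- half-angle facts for α/4
  have hcos4 : Real.cos (α/4)^2 = (1+c)/2 := by
    have := Real.cos_sq (α/4)
    rw [show 2*(α/4) = α/2 by ring] at this
    rw [this]; ring
  have hsin4 : Real.sin (α/4)^2 = (1-c)/2 := by
    have := Real.sin_sq_add_cos_sq (α/4); rw [hcos4] at this; linarith
  have hcos4pos : 0 < Real.cos (α/4) := Real.cos_pos_of_mem_Ioo ⟨by linarith, by linarith⟩
  have htan : Real.tan (α/4)^2 = (1-c)/(1+c) := by
    rw [Real.tan_eq_sin_div_cos, div_pow, hsin4, hcos4]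
    rw [div_div_div_cancel_right₀]
    exact two_ne_zero
  set k1 := Real.tan (α/4)^2 with hk1def
  have hk1_nonneg : 0 ≤ k1 := sq_nonneg _
  have hk1_lt_one : k1 < 1 := by
    rw [htan, div_lt_one (by linarith)]; linarith
  -- second conjunct
  have hk1_lt_s : k1 < Real.sin (α/2) := by
    rw [htan, div_lt_iff₀ (by linarith : (0:ℝ) < 1+c)]
    nlinarith [mul_pos hs hc]
  have hconj2 : 2 * Real.arcsin k1 < α := by
    have hlt : Real.arcsin k1 < Real.arcsin (Real.sin (α/2)) :=
      Real.strictMonoOn_arcsin ⟨by linarith, by linarith⟩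
        ⟨by linarith, by linarith⟩ hk1_lt_s
    rw [Real.arcsin_sin (by linarith) (by linarith)] at hlt
    linarith
  refine ⟨?_, hconj2⟩
  -- first conjunct
  have hsqrtc : 0 < Real.sqrt c := Real.sqrt_pos.2 hc
  have hsqrtc_sq : Real.sqrt c ^ 2 = c := Real.sq_sqrt hc.le
  have e1 : ellipticK (Real.sin (α/2)) = trigI 1 c := by
    rw [ellipticK_eq_trigI _ (by nlinarith), hssq]
    rw [show (1 : ℝ) - (1 - c^2) = c^2 by ring, Real.sqrt_sq hc.le]
  have hk1sq : 1 - k1^2 = (2*Real.sqrt c/(1+c))^2 := by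
    rw [htan]
    field_simp
    ring_nf
    nlinarith [hsqrtc_sq]
  have e2 : ellipticK k1 = trigI 1 (2*Real.sqrt c/(1+c)) := by
    rw [ellipticK_eq_trigI _ (by nlinarith), hk1sq, Real.sqrt_sq (by positivity)]
  have e3 : trigI 1 c = trigI ((1+c)/2) (Real.sqrt c) := by
    rw [trigI_eq_ratJ 1 c one_pos hc, trigI_eq_ratJ _ _ (by linarith) hsqrtc,
      ratJ_agm 1 c one_pos hc, one_mul]
  have e4 : trigI ((1+c)/2) (Real.sqrt c) = (1/((1+c)/2)) * trigI 1 (2*Real.sqrt c/(1+c)) := by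
    have h := trigI_scale ((1+c)/2) 1 (2*Real.sqrt c/(1+c)) (by linarith)
    rw [mul_one] at h
    rw [show (1+c)/2 * (2*Real.sqrt c/(1+c)) = Real.sqrt c by field_simp] at h
    exact h
  rw [e1, e3, e4, ← e2, hcos4]
end
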